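/- Ramsey lemma for splits of words: let φ : Γ* → M be a monoid morphism into a finite monoid M and r ≥ 1. Then there exists N ∈ ℕ such that every word s = uvw ∈ Γ* with |v| ≥ N admits a factorization s = u' v'₁ ⋯ v'_r w' where u is a prefix of u', w is a suffix of w', each v'_i is nonempty, φ(u') = φ(u' v'₁) = ⋯ = φ(u' v'₁ ⋯ v'_r), and φ(w') = φ(v'_r w') = ⋯ = φ(v'₁ ⋯ v'_r w'). -/

import Mathlib

private lemma take_join_seg {Γ : Type*} (v : List Γ) (p : ℕ → ℕ) :
    ∀ n : ℕ, (∀ i < n, p i ≤ p (i + 1)) →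
      v.take (p 0) ++ ((List.range n).map fun i => (v.take (p (i + 1))).drop (p i)).flatten
        = v.take (p n) := by
  intro n
  induction n with
  | zero => simp
  | succ n ih =>
    intro h
    rw [List.range_succ, List.map_append, List.flatten_append, ← List.append_assoc,
      ih fun i hi => h i (Nat.lt_succ_of_lt hi)]
    simp only [List.map_cons, List.map_nil, List.flatten_cons, List.flatten_nil, List.append_nil]
    have h1 : p n ≤ p (n + 1) := h n (Nat.lt_succ_self n)
    conv_lhs => rw [show v.take (p n) = (v.take (p (n + 1))).take (p n) by
      rw [List.take_take, min_eq_left h1]]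
    exact List.take_append_drop _ _

theorem ramsey_split {Γ M : Type*} [Monoid M] [Finite M]
    (φ : List Γ → M) (hφ : ∀ x y : List Γ, φ (x ++ y) = φ x * φ y)
    (r : ℕ) (hr : 1 ≤ r) :
    ∃ N : ℕ, ∀ u v w : List Γ, N ≤ v.length →
      ∃ (u' w' : List Γ) (vs : List (List Γ)),
        vs.length = r ∧
        u ++ v ++ w = u' ++ vs.flatten ++ w' ∧
        u <+: u' ∧ w <:+ w' ∧
        (∀ v' ∈ vs, v' ≠ []) ∧
        (∀ i ≤ r, φ (u' ++ (vs.take i).flatten) = φ u') ∧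
        (∀ i ≤ r, φ ((vs.drop i).flatten ++ w') = φ w') := by
  classical
  have : Fintype M := Fintype.ofFinite M
  set N := Fintype.card (M × M) * r with hN
  refine ⟨N, fun u v w hv => ?_⟩
  set f : ℕ → M × M := fun k => (φ (u ++ v.take k), φ (v.drop k ++ w)) with hf
  have hcard : (Finset.univ : Finset (M × M)).card * r < (Finset.range (N + 1)).card := by
    rw [Finset.card_univ, Finset.card_range]
    exact Nat.lt_succ_self _
  obtain ⟨c, -, hc⟩ := Finset.exists_lt_card_fiber_of_mul_lt_card_of_maps_to
    (fun a _ => Finset.mem_univ (f a)) hcard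
  obtain ⟨T, hTsub, hTcard⟩ := Finset.exists_subset_card_eq (Nat.succ_le_of_lt hc)
  set p : ℕ → ℕ :=
    fun i => T.orderEmbOfFin hTcard ⟨min i r, Nat.lt_succ_of_le (min_le_right i r)⟩ with hp
  have hmem : ∀ i : ℕ, p i ∈ T := fun i => T.orderEmbOfFin_mem hTcard _
  have hfc : ∀ i : ℕ, f (p i) = c := fun i => (Finset.mem_filter.mp (hTsub (hmem i))).2
  have hple : ∀ i : ℕ, p i ≤ N := fun i =>
    Nat.lt_succ_iff.mp (Finset.mem_range.mp (Finset.mem_filter.mp (hTsub (hmem i))).1)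
  have hlt : ∀ i < r, p i < p (i + 1) := by
    intro i hi
    apply (T.orderEmbOfFin hTcard).strictMono
    have h1 : min i r = i := min_eq_left hi.le
    have h2 : min (i + 1) r = i + 1 := min_eq_left hi
    simp [Fin.mk_lt_mk, h1, h2]
  have hmono : ∀ i ≤ r, p i ≤ p r := by
    intro i hi
    apply ((T.orderEmbOfFin hTcard).strictMono).monotone
    simp only [Fin.mk_le_mk, min_self]
    exact min_le_right i r
  have hpr : p r ≤ v.length := le_trans (hple r) hv
  refine ⟨u ++ v.take (p 0), v.drop (p r) ++ w,
    (List.range r).map fun i => (v.take (p (i + 1))).drop (p i), by simp, ?_,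
    List.prefix_append _ _, List.suffix_append _ _, ?_, ?_, ?_⟩
  · -- concatenation
    have E1 := take_join_seg v p r fun i hi => (hlt i hi).le
    have : (u ++ v.take (p 0)) ++
        ((List.range r).map fun i => (v.take (p (i + 1))).drop (p i)).flatten
          = u ++ v.take (p r) := by
      rw [List.append_assoc, E1]
    rw [this]
    simp only [List.append_assoc]
    rw [← List.append_assoc (v.take (p r)), List.take_append_drop]
  · -- nonemptiness
    intro v' hv'
    obtain ⟨i, hi, rfl⟩ := List.mem_map.mp hv'
    rw [List.mem_range] at hi
    have h1 : p (i + 1) ≤ v.length := le_trans (hmono (i + 1) hi) hpr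
    have h2 := hlt i hi
    intro hnil
    have h3 := congrArg List.length hnil
    simp only [List.length_drop, List.length_take, List.length_nil, min_eq_left h1] at h3
    omega
  · -- prefix condition
    intro i hi
    have E2 : (u ++ v.take (p 0)) ++
        (((List.range r).map fun i => (v.take (p (i + 1))).drop (p i)).take i).flatten
          = u ++ v.take (p i) := by
      rw [← List.map_take, List.take_range, min_eq_left hi, List.append_assoc,
        take_join_seg v p i fun j hj => (hlt j (lt_of_lt_of_le hj hi)).le]
    rw [E2]
    exact congrArg Prod.fst ((hfc i).trans (hfc 0).symm)
  · -- suffix condition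
    intro i hi
    have E2 : v.take (p 0) ++
        (((List.range r).map fun i => (v.take (p (i + 1))).drop (p i)).take i).flatten
          = v.take (p i) := by
      rw [← List.map_take, List.take_range, min_eq_left hi,
        take_join_seg v p i fun j hj => (hlt j (lt_of_lt_of_le hj hi)).le]
    have E1 : v.take (p 0) ++
        ((List.range r).map fun i => (v.take (p (i + 1))).drop (p i)).flatten
          = v.take (p r) := take_join_seg v p r fun j hj => (hlt j hj).le
    have Esplit : ((List.range r).map fun i => (v.take (p (i + 1))).drop (p i)).flatten
        = (((List.range r).map fun i => (v.take (p (i + 1))).drop (p i)).take i).flatten ++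
          (((List.range r).map fun i => (v.take (p (i + 1))).drop (p i)).drop i).flatten := by
      rw [← List.flatten_append, List.take_append_drop]
    have E3 : v.take (p i) ++
        (((List.range r).map fun i => (v.take (p (i + 1))).drop (p i)).drop i).flatten
          = v.take (p r) := by
      rw [← E2, List.append_assoc, ← Esplit]; exact E1
    have E4 : (((List.range r).map fun i => (v.take (p (i + 1))).drop (p i)).drop i).flatten
        = (v.take (p r)).drop (p i) := by
      apply List.append_cancel_left (as := v.take (p i))
      rw [E3]
      conv_lhs => rw [← List.take_append_drop (p i) (v.take (p r))]
      rw [List.take_take, min_eq_left (hmono i hi)]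
    have E5 : (v.take (p r)).drop (p i) ++ v.drop (p r) = v.drop (p i) := by
      conv_rhs => rw [← List.take_append_drop (p r) v]
      rw [List.drop_append]
      simp [List.length_take, min_eq_left hpr, Nat.sub_eq_zero_of_le (hmono i hi)]
    rw [E4, ← List.append_assoc, E5]
    exact congrArg Prod.snd ((hfc i).trans (hfc r).symm)
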